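/- Let $G$ be a finite group, $M$ a finite-dimensional $\mathbb{C}$-vector space, and suppose that for every finite-dimensional complex representation $E$ of $G$ we are given a linear map $b_E : E \otimes E^* \to \mathrm{End}(M)$, natural in $E$, satisfying the multiplicativity relation $b_{E_1 \otimes E_2}(v_1 \otimes v_2 \otimes v_1^* \otimes v_2^*) = b_{E_1}(v_1 \otimes v_1^*)\, b_{E_2}(v_2 \otimes v_2^*)$ for all $v_i \in E_i$, $v_i^* \in E_i^*$, and sending the canonical element of the trivial representation to $\mathrm{id}_M$. Then there is a unique unital algebra homomorphism $\phi$ from the algebra of $\mathbb{C}$-valued functions on $G$ (with pointwise multiplication) to $\mathrm{End}(M)$ such that $\phi$ sends each matrix coefficient $g \mapsto v^*(\rho_E(g)v)$ to $b_E(v \otimes v^*)$. -/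

import Mathlib

open scoped TensorProduct

/-- Reconstruction (finite-group model of Lemma 3.6): a natural, multiplicative, unital
family of maps `b_E : E ⊗ E* → End(M)` indexed by finite-dimensional representations `E`
of a finite group `G` comes from a unique unital algebra homomorphism `φ` from the
algebra of functions on `G` (pointwise multiplication) to `End(M)`, with `φ` sending the
matrix coefficient `g ↦ ψ(ρ(g)v)` to `b_E(v ⊗ ψ)`. -/
theorem reconstruction_from_matrix_coefficients
    {G : Type} [Group G] [Finite G] {M : Type} [AddCommGroup M] [Module ℂ M]
    [FiniteDimensional ℂ M]
    (b : ∀ (E : Type) [AddCommGroup E] [Module ℂ E] [FiniteDimensional ℂ E],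
      Representation ℂ G E → (E →ₗ[ℂ] Module.Dual ℂ E →ₗ[ℂ] Module.End ℂ M))
    (hnat : ∀ (E₁ E₂ : Type) [AddCommGroup E₁] [Module ℂ E₁] [FiniteDimensional ℂ E₁]
      [AddCommGroup E₂] [Module ℂ E₂] [FiniteDimensional ℂ E₂]
      (ρ₁ : Representation ℂ G E₁) (ρ₂ : Representation ℂ G E₂)
      (f : E₁ →ₗ[ℂ] E₂), (∀ g : G, f ∘ₗ ρ₁ g = ρ₂ g ∘ₗ f) →
      ∀ (v : E₁) (ψ : Module.Dual ℂ E₂), b E₂ ρ₂ (f v) ψ = b E₁ ρ₁ v (ψ ∘ₗ f))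
    (hmul : ∀ (E₁ E₂ : Type) [AddCommGroup E₁] [Module ℂ E₁] [FiniteDimensional ℂ E₁]
      [AddCommGroup E₂] [Module ℂ E₂] [FiniteDimensional ℂ E₂]
      (ρ₁ : Representation ℂ G E₁) (ρ₂ : Representation ℂ G E₂)
      (v₁ : E₁) (v₂ : E₂) (ψ₁ : Module.Dual ℂ E₁) (ψ₂ : Module.Dual ℂ E₂),
      b (E₁ ⊗[ℂ] E₂) (ρ₁.tprod ρ₂) (v₁ ⊗ₜ[ℂ] v₂)
        ((TensorProduct.lid ℂ ℂ).toLinearMap ∘ₗ TensorProduct.map ψ₁ ψ₂) =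
        b E₁ ρ₁ v₁ ψ₁ * b E₂ ρ₂ v₂ ψ₂)
    (hone : b ℂ (Representation.trivial ℂ G ℂ) 1 LinearMap.id = 1) :
    ∃! φ : (G → ℂ) →ₐ[ℂ] Module.End ℂ M,
      ∀ (E : Type) [AddCommGroup E] [Module ℂ E] [FiniteDimensional ℂ E]
        (ρ : Representation ℂ G E) (v : E) (ψ : Module.Dual ℂ E),
        φ (fun g => ψ (ρ g v)) = b E ρ v ψ := by
  classical
  haveI := Fintype.ofFinite G
  -- the right regular representation on functions on G
  let ρreg : Representation ℂ G (G → ℂ) :=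
    { toFun := fun g =>
        { toFun := fun f x => f (x * g)
          map_add' := fun f₁ f₂ => rfl
          map_smul' := fun c f => rfl }
      map_one' := LinearMap.ext fun f => funext fun x => by simp
      map_mul' := fun g h => LinearMap.ext fun f => funext fun x => by
        show f (x * (g * h)) = f (x * g * h)
        rw [mul_assoc] }
  -- evaluation at the identity
  let ev₁ : Module.Dual ℂ (G → ℂ) := LinearMap.proj (1 : G)
  have hev : ∀ (f : G → ℂ) (g : G), ev₁ (ρreg g f) = f g := by
    intro f g; simp [ev₁, ρreg]
  -- candidate map
  let φ₀ : (G → ℂ) →ₗ[ℂ] Module.End ℂ M := (b (G → ℂ) ρreg).flip ev₁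
  -- φ₀ is unital
  have hφone : φ₀ 1 = 1 := by
    let c : ℂ →ₗ[ℂ] (G → ℂ) :=
      { toFun := fun a _ => a
        map_add' := fun a b => rfl
        map_smul' := fun r a => rfl }
    have hc : ∀ g : G, c ∘ₗ (Representation.trivial ℂ G ℂ) g = ρreg g ∘ₗ c :=
      fun g => rfl
    have h := hnat ℂ (G → ℂ) (Representation.trivial ℂ G ℂ) ρreg c hc 1 ev₁
    have hc1 : c 1 = (1 : G → ℂ) := rfl
    have hid : ev₁ ∘ₗ c = LinearMap.id := by
      apply LinearMap.ext_ring; simp [ev₁, c]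
    rw [hc1, hid] at h
    simpa [φ₀] using h.trans hone
  -- φ₀ is multiplicative
  have hφmul : ∀ f₁ f₂ : G → ℂ, φ₀ (f₁ * f₂) = φ₀ f₁ * φ₀ f₂ := by
    intro f₁ f₂
    let m : (G → ℂ) ⊗[ℂ] (G → ℂ) →ₗ[ℂ] (G → ℂ) := LinearMap.mul' ℂ (G → ℂ)
    have hm : ∀ g : G, m ∘ₗ (ρreg.tprod ρreg) g = ρreg g ∘ₗ m := by
      intro g
      apply TensorProduct.ext'
      intro x y
      rfl
    have h := hnat _ _ (ρreg.tprod ρreg) ρreg m hm (f₁ ⊗ₜ[ℂ] f₂) ev₁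
    have hm' : m (f₁ ⊗ₜ[ℂ] f₂) = f₁ * f₂ := rfl
    have hev' : ev₁ ∘ₗ m =
        (TensorProduct.lid ℂ ℂ).toLinearMap ∘ₗ TensorProduct.map ev₁ ev₁ := by
      apply TensorProduct.ext'
      intro x y
      simp [m, ev₁]
    rw [hm', hev'] at h
    exact h.trans (hmul _ _ ρreg ρreg f₁ f₂ ev₁ ev₁)
  let φ : (G → ℂ) →ₐ[ℂ] Module.End ℂ M := AlgHom.ofLinearMap φ₀ hφone hφmul
  have key : ∀ (E : Type) [AddCommGroup E] [Module ℂ E] [FiniteDimensional ℂ E]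
      (ρ : Representation ℂ G E) (v : E) (ψ : Module.Dual ℂ E),
      φ (fun g => ψ (ρ g v)) = b E ρ v ψ := by
    intro E _ _ _ ρ v ψ
    let T : E →ₗ[ℂ] (G → ℂ) :=
      { toFun := fun w g => ψ (ρ g w)
        map_add' := fun w₁ w₂ => by funext g; simp
        map_smul' := fun c w => by funext g; simp }
    have hT : ∀ g : G, T ∘ₗ ρ g = ρreg g ∘ₗ T := by
      intro g
      refine LinearMap.ext fun w => funext fun x => ?_
      show ψ (ρ x (ρ g w)) = ψ (ρ (x * g) w)
      rw [map_mul]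
      rfl
    have h := hnat E (G → ℂ) ρ ρreg T hT v ev₁
    have hTψ : ev₁ ∘ₗ T = ψ := by
      ext w
      show ψ (ρ 1 w) = ψ w
      rw [map_one]
      rfl
    rw [hTψ] at h
    exact h
  refine ⟨φ, key, ?_⟩
  intro φ' hφ'
  ext f
  have hf : (fun g => ev₁ (ρreg g f)) = f := by
    funext g; exact hev f g
  have h1 := hφ' (G → ℂ) ρreg f ev₁
  have h2 := key (G → ℂ) ρreg f ev₁
  rw [hf] at h1 h2
  rw [h1, ← h2]
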